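/- If E[e^{γX_1}] < ∞ for some γ > 0 and the distribution of N is in the Gumbel max-domain of attraction with auxiliary function a satisfying a(x)/x^{2/3} → ∞ as x → ∞, then P[S_N > x] ~ P[N > x/μ] as x → ∞, with no independence assumption between N and the X_i. -/

import Mathlib

open MeasureTheory ProbabilityTheory Filter Topology

open Real

lemma exp_le_quad (v : ℝ) : Real.exp v ≤ 1 + v + v^2 * Real.exp |v| := by
  rcases le_or_gt v 0 with h | h
  · -- v ≤ 0 : exp v ≤ 1 + v + v^2
    have h2 : Real.exp v ≤ 1 + v + v^2 := by
      rcases le_or_gt (-1) v with h1 | h1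
      · have := Real.abs_exp_sub_one_sub_id_le (x := v) (by rw [abs_le]; constructor <;> linarith)
        have := abs_le.1 this
        nlinarith [this.2]
      · have h3 : Real.exp v ≤ 1 := Real.exp_le_one_iff.2 h
        nlinarith
    have h4 : (1:ℝ) ≤ Real.exp |v| := Real.one_le_exp (abs_nonneg v)
    nlinarith [sq_nonneg v]
  · -- v > 0 : exp v * (1 - v^2) ≤ 1 + v
    have h4 : Real.exp |v| = Real.exp v := by rw [abs_of_pos h]
    rw [h4]
    rcases le_or_gt 1 v with h1 | h1
    · have h5 : (0:ℝ) ≤ v^2 - 1 := by nlinarith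
      nlinarith [mul_nonneg (Real.exp_pos v).le h5]
    · have key : Real.exp v * (1 - v) ≤ 1 := by
        have := Real.add_one_le_exp (-v)
        calc Real.exp v * (1 - v) ≤ Real.exp v * Real.exp (-v) := by
              apply mul_le_mul_of_nonneg_left (by linarith) (Real.exp_pos v).le
          _ = 1 := by rw [← Real.exp_add]; simp
      nlinarith [Real.exp_pos v]
-- s² ≤ 4 e^s for s ≥ 0
lemma sq_le_four_exp {s : ℝ} (hs : 0 ≤ s) : s^2 ≤ 4 * Real.exp s := by
  have h1 : s/2 ≤ Real.exp (s/2) := (Real.add_one_le_exp (s/2)).trans' (by linarith)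
  have h2 : Real.exp s = Real.exp (s/2) * Real.exp (s/2) := by
    rw [← Real.exp_add]; ring_nf
  nlinarith [Real.exp_pos (s/2)]

lemma mgf_quad_bound {Ω : Type*} [MeasureSpace Ω] [IsProbabilityMeasure (ℙ : Measure Ω)]
    (Y : Ω → ℝ) (hY : Measurable Y) (hpos : 0 ≤ᵐ[ℙ] Y) (hint : Integrable Y ℙ)
    (μ γ : ℝ) (hμ : μ = ∫ ω, Y ω ∂ℙ) (hγ : 0 < γ)
    (hexp : Integrable (fun ω => Real.exp (γ * Y ω)) ℙ) :
    ∃ c : ℝ, 0 < c ∧ ∀ t : ℝ, |t| ≤ γ/2 →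
      Integrable (fun ω => Real.exp (t * Y ω)) ℙ ∧
      mgf Y ℙ t ≤ Real.exp (t * μ + c * t^2) := by
  set K := ∫ ω, Real.exp (γ * Y ω) ∂ℙ with hK
  have hKnn : 0 ≤ K := integral_nonneg fun ω => (Real.exp_pos _).le
  set c0 : ℝ := (16/γ^2) * Real.exp (γ * |μ|) * K with hc0
  have hc0nn : 0 ≤ c0 := by positivity
  refine ⟨c0 + 1, by positivity, fun t ht => ?_⟩
  -- pointwise domination for integrability
  have hdom : ∀ᵐ ω ∂ℙ, ‖Real.exp (t * Y ω)‖ ≤ 1 + Real.exp (γ * Y ω) := by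
    filter_upwards [hpos] with ω hω
    rw [Real.norm_eq_abs, abs_of_pos (Real.exp_pos _)]
    rcases le_or_gt t 0 with h | h
    · have : t * Y ω ≤ 0 := mul_nonpos_of_nonpos_of_nonneg h hω
      have := Real.exp_le_one_iff.2 this
      linarith [Real.exp_pos (γ * Y ω)]
    · have : t * Y ω ≤ γ * Y ω := by
        apply mul_le_mul_of_nonneg_right _ hω
        have := (abs_le.1 ht).2; linarith
      have := Real.exp_le_exp.2 this
      linarith
  have hmeas : ∀ s : ℝ, AEStronglyMeasurable (fun ω => Real.exp (s * Y ω)) ℙ :=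
    fun s => ((hY.const_mul s).exp).aestronglyMeasurable
  have hintt : Integrable (fun ω => Real.exp (t * Y ω)) ℙ :=
    Integrable.mono' ((integrable_const 1).add hexp) (hmeas t) hdom
  refine ⟨hintt, ?_⟩
  -- centered version
  have hcent : Integrable (fun ω => Real.exp (t * (Y ω - μ))) ℙ := by
    have : (fun ω => Real.exp (t * (Y ω - μ))) =
        fun ω => Real.exp (-(t*μ)) * Real.exp (t * Y ω) := by
      funext ω; rw [← Real.exp_add]; ring_nf
    rw [this]; exact hintt.const_mul _
  -- pointwise quadratic bound
  have hpt : ∀ᵐ ω ∂ℙ, Real.exp (t * (Y ω - μ)) ≤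
      1 + t * (Y ω - μ) + t^2 * ((16/γ^2) * Real.exp (γ * |μ|) * Real.exp (γ * Y ω)) := by
    filter_upwards [hpos] with ω hω
    have hYnn : (0:ℝ) ≤ Y ω := hω
    set v := t * (Y ω - μ) with hv
    have h1 := exp_le_quad v
    have hZ : |Y ω - μ| ≤ Y ω + |μ| := by
      rw [abs_le]
      have h5 := neg_abs_le μ
      have h6 := le_abs_self μ
      constructor <;> linarith
    have hZnn : 0 ≤ Y ω + |μ| := by have := abs_nonneg μ; linarith
    have habs : |v| ≤ (γ/2) * (Y ω + |μ|) := by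
      rw [hv, abs_mul]
      exact mul_le_mul ht hZ (abs_nonneg _) (by linarith)
    have hexpabs : Real.exp |v| ≤ Real.exp ((γ/2) * (Y ω + |μ|)) := Real.exp_le_exp.2 habs
    have hsq : (Y ω - μ)^2 ≤ (Y ω + |μ|)^2 := by
      have := sq_abs (Y ω - μ); nlinarith [abs_nonneg (Y ω - μ)]
    have key : v^2 * Real.exp |v| ≤
        t^2 * ((16/γ^2) * Real.exp (γ * |μ|) * Real.exp (γ * Y ω)) := by
      have hv2 : v^2 = t^2 * (Y ω - μ)^2 := by rw [hv]; ring
      have step1 : v^2 * Real.exp |v| ≤ t^2 * ((Y ω + |μ|)^2 * Real.exp ((γ/2) * (Y ω + |μ|))) := by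
        rw [hv2, mul_assoc]
        apply mul_le_mul_of_nonneg_left _ (sq_nonneg t)
        apply mul_le_mul hsq hexpabs (Real.exp_pos _).le (sq_nonneg _)
      have step2 : (Y ω + |μ|)^2 * Real.exp ((γ/2) * (Y ω + |μ|)) ≤
          (16/γ^2) * Real.exp (γ * (Y ω + |μ|)) := by
        have h4 := sq_le_four_exp (s := (γ/2) * (Y ω + |μ|)) (by positivity)
        have hsq2 : ((γ/2) * (Y ω + |μ|))^2 = (γ^2/4) * (Y ω + |μ|)^2 := by ring
        have hZ2 : (Y ω + |μ|)^2 ≤ (16/γ^2) * Real.exp ((γ/2) * (Y ω + |μ|)) := by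
          rw [hsq2] at h4
          have hγ2 : 0 < γ^2 := by positivity
          calc (Y ω + |μ|)^2 = (4/γ^2) * ((γ^2/4) * (Y ω + |μ|)^2) := by
                field_simp
            _ ≤ (4/γ^2) * (4 * Real.exp ((γ/2) * (Y ω + |μ|))) := by
                apply mul_le_mul_of_nonneg_left h4 (by positivity)
            _ = (16/γ^2) * Real.exp ((γ/2) * (Y ω + |μ|)) := by ring
        calc (Y ω + |μ|)^2 * Real.exp ((γ/2) * (Y ω + |μ|))
            ≤ (16/γ^2) * Real.exp ((γ/2) * (Y ω + |μ|)) * Real.exp ((γ/2) * (Y ω + |μ|)) := by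
              apply mul_le_mul_of_nonneg_right hZ2 (Real.exp_pos _).le
          _ = (16/γ^2) * Real.exp (γ * (Y ω + |μ|)) := by
              rw [mul_assoc, ← Real.exp_add]; ring_nf
      have step3 : Real.exp (γ * (Y ω + |μ|)) = Real.exp (γ * |μ|) * Real.exp (γ * Y ω) := by
        rw [← Real.exp_add]; ring_nf
      calc v^2 * Real.exp |v| ≤ t^2 * ((Y ω + |μ|)^2 * Real.exp ((γ/2) * (Y ω + |μ|))) := step1
        _ ≤ t^2 * ((16/γ^2) * Real.exp (γ * (Y ω + |μ|))) := by
            apply mul_le_mul_of_nonneg_left step2 (sq_nonneg t)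
        _ = t^2 * ((16/γ^2) * Real.exp (γ * |μ|) * Real.exp (γ * Y ω)) := by rw [step3]; ring
    linarith
  -- integrate
  have hintRHS : Integrable (fun ω => 1 + t * (Y ω - μ) +
      t^2 * ((16/γ^2) * Real.exp (γ * |μ|) * Real.exp (γ * Y ω))) ℙ := by
    apply Integrable.add
    · exact (integrable_const 1).add (((hint.sub (integrable_const μ)).const_mul t))
    · exact (hexp.const_mul _).const_mul _
  have hI : ∫ ω, Real.exp (t * (Y ω - μ)) ∂ℙ ≤ 1 + c0 * t^2 := by
    have := integral_mono_ae hcent hintRHS hpt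
    have hEY : ∫ ω, (Y ω - μ) ∂ℙ = 0 := by
      rw [integral_sub hint (integrable_const μ)]
      simp [hμ.symm]
    calc ∫ ω, Real.exp (t * (Y ω - μ)) ∂ℙ
        ≤ ∫ ω, (1 + t * (Y ω - μ) + t^2 * ((16/γ^2) * Real.exp (γ * |μ|) * Real.exp (γ * Y ω))) ∂ℙ := this
      _ = 1 + c0 * t^2 := by
          have hA : Integrable (fun ω => (1:ℝ) + t * (Y ω - μ)) ℙ :=
            (integrable_const 1).add ((hint.sub (integrable_const μ)).const_mul t)
          have hB : Integrable (fun ω => t^2 * ((16/γ^2) * Real.exp (γ * |μ|) * Real.exp (γ * Y ω))) ℙ :=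
            ((hexp.const_mul _).const_mul _)
          have hC : Integrable (fun ω => t * (Y ω - μ)) ℙ :=
            (hint.sub (integrable_const μ)).const_mul t
          rw [integral_add hA hB, integral_add (integrable_const 1) hC,
            integral_const_mul, integral_const_mul, integral_const_mul, hEY]
          simp only [integral_const, measure_univ, probReal_univ, ENNReal.toReal_one, smul_eq_mul, mul_zero,
            mul_one, add_zero]
          rw [hc0, hK]
          ring
  -- conclude
  have hmgf : mgf Y ℙ t = Real.exp (t * μ) * ∫ ω, Real.exp (t * (Y ω - μ)) ∂ℙ := by
    have hfun : (fun ω => Real.exp (t * Y ω)) = fun ω => Real.exp (t*μ) * Real.exp (t*(Y ω - μ)) := by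
      funext ω; rw [← Real.exp_add]; congr 1; ring
    rw [mgf, hfun, integral_const_mul]
  rw [hmgf]
  calc Real.exp (t * μ) * ∫ ω, Real.exp (t * (Y ω - μ)) ∂ℙ
      ≤ Real.exp (t * μ) * (1 + c0 * t^2) := by
        apply mul_le_mul_of_nonneg_left hI (Real.exp_pos _).le
    _ ≤ Real.exp (t * μ) * Real.exp ((c0+1) * t^2) := by
        apply mul_le_mul_of_nonneg_left _ (Real.exp_pos _).le
        have h1 : (1:ℝ) + c0 * t^2 ≤ 1 + (c0+1)*t^2 := by nlinarith [sq_nonneg t]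
        have := Real.add_one_le_exp ((c0+1) * t^2)
        linarith
    _ = Real.exp (t * μ + (c0+1) * t^2) := by rw [← Real.exp_add]
section Chernoff
variable {Ω : Type*} [MeasureSpace Ω] [IsProbabilityMeasure (ℙ : Measure Ω)]
  (X : ℕ → Ω → ℝ) (hX : ∀ i, Measurable (X i))
  (hiid : iIndepFun X ℙ)
  (hid : ∀ i, IdentDistrib (X i) (X 0) ℙ ℙ)
  (μ γ c : ℝ)
  (hmgf : ∀ t : ℝ, |t| ≤ γ/2 →
      Integrable (fun ω => Real.exp (t * X 0 ω)) ℙ ∧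
      mgf (X 0) ℙ t ≤ Real.exp (t * μ + c * t^2))

include hX hiid hid hmgf

lemma mgf_sum_le (n : ℕ) (t : ℝ) (ht : |t| ≤ γ/2) :
    Integrable (fun ω => Real.exp (t * (∑ i ∈ Finset.range n, X i) ω)) ℙ ∧
    mgf (∑ i ∈ Finset.range n, X i) ℙ t ≤ Real.exp (n * (t * μ + c * t^2)) := by
  have hident : ∀ i, Integrable (fun ω => Real.exp (t * X i ω)) ℙ ∧
      mgf (X i) ℙ t = mgf (X 0) ℙ t := by
    intro i
    have hcomp : IdentDistrib (fun ω => Real.exp (t * X i ω)) (fun ω => Real.exp (t * X 0 ω)) ℙ ℙ :=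
      (hid i).comp ((measurable_id.const_mul t).exp)
    constructor
    · exact hcomp.integrable_iff.mpr (hmgf t ht).1
    · exact hcomp.integral_eq
  constructor
  · exact hiid.integrable_exp_mul_sum hX (fun i _ => (hident i).1)
  · have h1 : mgf (∑ i ∈ Finset.range n, X i) ℙ t = (mgf (X 0) ℙ t)^n := by
      rw [hiid.mgf_sum hX]
      rw [Finset.prod_congr rfl (fun i _ => (hident i).2), Finset.prod_const,
        Finset.card_range]
    rw [h1]
    calc (mgf (X 0) ℙ t)^n ≤ (Real.exp (t * μ + c * t^2))^n := by
          apply pow_le_pow_left₀ (mgf_nonneg) (hmgf t ht).2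
      _ = Real.exp (n * (t * μ + c * t^2)) := by
          rw [← Real.exp_nat_mul]

lemma chernoff_upper (n : ℕ) (s t : ℝ) (ht0 : 0 ≤ t) (ht : |t| ≤ γ/2) :
    (ℙ {ω | s ≤ ∑ i ∈ Finset.range n, X i ω}).toReal ≤
      Real.exp (-t * s + n * (t * μ + c * t^2)) := by
  obtain ⟨hint, hbd⟩ := mgf_sum_le X hX hiid hid μ γ c hmgf n t ht
  have h0 : {ω | s ≤ ∑ i ∈ Finset.range n, X i ω} =
      {ω | s ≤ (∑ i ∈ Finset.range n, X i) ω} := by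
    ext ω; simp [Finset.sum_apply]
  rw [h0]
  calc (ℙ {ω | s ≤ (∑ i ∈ Finset.range n, X i) ω}).toReal
      ≤ Real.exp (-t * s) * mgf (∑ i ∈ Finset.range n, X i) ℙ t :=
        measure_ge_le_exp_mul_mgf s ht0 hint
    _ ≤ Real.exp (-t * s) * Real.exp (n * (t * μ + c * t^2)) := by
        apply mul_le_mul_of_nonneg_left hbd (Real.exp_pos _).le
    _ = Real.exp (-t * s + n * (t * μ + c * t^2)) := by rw [← Real.exp_add]

lemma chernoff_lower (n : ℕ) (s t : ℝ) (ht0 : t ≤ 0) (ht : |t| ≤ γ/2) :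
    (ℙ {ω | ∑ i ∈ Finset.range n, X i ω ≤ s}).toReal ≤
      Real.exp (-t * s + n * (t * μ + c * t^2)) := by
  obtain ⟨hint, hbd⟩ := mgf_sum_le X hX hiid hid μ γ c hmgf n t ht
  have h0 : {ω | ∑ i ∈ Finset.range n, X i ω ≤ s} =
      {ω | (∑ i ∈ Finset.range n, X i) ω ≤ s} := by
    ext ω; simp [Finset.sum_apply]
  rw [h0]
  calc (ℙ {ω | (∑ i ∈ Finset.range n, X i) ω ≤ s}).toReal
      ≤ Real.exp (-t * s) * mgf (∑ i ∈ Finset.range n, X i) ℙ t :=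
        measure_le_le_exp_mul_mgf s ht0 hint
    _ ≤ Real.exp (-t * s) * Real.exp (n * (t * μ + c * t^2)) := by
        apply mul_le_mul_of_nonneg_left hbd (Real.exp_pos _).le
    _ = Real.exp (-t * s + n * (t * μ + c * t^2)) := by rw [← Real.exp_add]
end Chernoff
section Tail
variable {Ω : Type*} [MeasureSpace Ω] [IsProbabilityMeasure (ℙ : Measure Ω)]
  (N : Ω → ℕ) (hN : Measurable N)

include hN

lemma tail_tendsto_zero :
    Tendsto (fun x : ℝ => (ℙ {ω | x < (N ω : ℝ)}).toReal) atTop (𝓝 0) := by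
  have hNr : Measurable (fun ω => (N ω : ℝ)) := measurable_from_top.comp hN
  have hmeasn : ∀ x : ℝ, MeasurableSet {ω | x < (N ω : ℝ)} := fun x =>
    measurableSet_lt measurable_const hNr
  -- along naturals
  have hanti : Antitone (fun n : ℕ => {ω | (n:ℝ) < (N ω : ℝ)}) := by
    intro i j hij ω hω
    simp only [Set.mem_setOf_eq] at *
    exact lt_of_le_of_lt (by exact_mod_cast hij) hω
  have hiInter : ⋂ n : ℕ, {ω | (n:ℝ) < (N ω : ℝ)} = ∅ := by
    ext ω
    simp only [Set.mem_iInter, Set.mem_setOf_eq, Set.mem_empty_iff_false, iff_false, not_forall,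
      not_lt]
    exact ⟨N ω, le_refl _⟩
  have hnat : Tendsto (fun n : ℕ => ℙ {ω | (n:ℝ) < (N ω : ℝ)}) atTop (𝓝 0) := by
    have := tendsto_measure_iInter_atTop (μ := (ℙ : Measure Ω))
      (s := fun n : ℕ => {ω | (n:ℝ) < (N ω : ℝ)})
      (fun n => (hmeasn n).nullMeasurableSet) hanti ⟨0, measure_ne_top _ _⟩
    rwa [hiInter, measure_empty] at this
  have hnatr : Tendsto (fun n : ℕ => (ℙ {ω | (n:ℝ) < (N ω : ℝ)}).toReal) atTop (𝓝 0) := by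
    have h0 : (0:ℝ) = (0 : ENNReal).toReal := by simp
    rw [h0]
    exact (ENNReal.tendsto_toReal (by simp)).comp hnat
  apply squeeze_zero' (Filter.Eventually.of_forall fun x => ENNReal.toReal_nonneg)
    ?_ (hnatr.comp tendsto_nat_floor_atTop)
  filter_upwards [eventually_ge_atTop (0:ℝ)] with x hx
  apply ENNReal.toReal_le_toReal (measure_ne_top _ _) (measure_ne_top _ _) |>.mpr
  apply measure_mono
  intro ω hω
  simp only [Set.mem_setOf_eq] at *
  exact lt_of_le_of_lt (Nat.floor_le hx) hω


lemma tail_pos (a : ℝ → ℝ)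
    (hGumbel : ∀ y : ℝ, Tendsto (fun x : ℝ =>
        (ℙ {ω | x + y * a x < (N ω : ℝ)}).toReal / (ℙ {ω | x < (N ω : ℝ)}).toReal)
        atTop (𝓝 (Real.exp (-y)))) :
    ∀ᶠ x in atTop, 0 < (ℙ {ω | x < (N ω : ℝ)}).toReal := by
  have h0 := hGumbel 0
  rw [show Real.exp (-0) = 1 by simp] at h0
  have := h0.eventually (eventually_gt_nhds (show (1:ℝ)/2 < 1 by norm_num))
  filter_upwards [this] with x hx
  by_contra h
  push_neg at h
  have hz : (ℙ {ω | x < (N ω : ℝ)}).toReal = 0 :=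
    le_antisymm h ENNReal.toReal_nonneg
  rw [hz, div_zero] at hx
  norm_num at hx

lemma aux_le_self (a : ℝ → ℝ)
    (hGumbel : ∀ y : ℝ, Tendsto (fun x : ℝ =>
        (ℙ {ω | x + y * a x < (N ω : ℝ)}).toReal / (ℙ {ω | x < (N ω : ℝ)}).toReal)
        atTop (𝓝 (Real.exp (-y)))) :
    ∀ᶠ x in atTop, a x ≤ x := by
  have h1 := hGumbel (-1)
  have hub := h1.eventually (eventually_lt_nhds
    (show Real.exp (-(-1)) < Real.exp 1 + 1 by rw [neg_neg]; linarith))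
  have hsmall := (tail_tendsto_zero N hN).eventually
    (eventually_lt_nhds (show (0:ℝ) < 1/(Real.exp 1 + 2) by positivity))
  -- hsmall : eventually (ℙ...).toReal < 1/(e+2)  (from tendsto to 0, values near 0)
  filter_upwards [hub, hsmall, tail_pos N hN a hGumbel] with x hx hsm hpos
  by_contra h
  push_neg at h
  have hall : {ω | x + (-1) * a x < (N ω : ℝ)} = Set.univ := by
    ext ω
    simp only [Set.mem_setOf_eq, Set.mem_univ, iff_true]
    have : (0:ℝ) ≤ (N ω : ℝ) := Nat.cast_nonneg _
    nlinarith
  rw [hall] at hx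
  simp only [measure_univ, ENNReal.toReal_one] at hx
  rw [one_div] at hx
  have h2 : 1/(Real.exp 1 + 2) ≤ (ℙ {ω | x < (N ω : ℝ)}).toReal := by
    rw [div_le_iff₀ (by positivity)] at *
    have h3 := (inv_lt_iff_one_lt_mul₀ hpos).mp hx
    nlinarith [hpos]
  linarith


noncomputable def chainSeq (a : ℝ → ℝ) (x1 : ℝ) : ℕ → ℝ
  | 0 => x1
  | (j+1) => chainSeq a x1 j + a (chainSeq a x1 j)

lemma chain_lower_bound (a : ℝ → ℝ)
    (hGumbel : ∀ y : ℝ, Tendsto (fun x : ℝ =>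
        (ℙ {ω | x + y * a x < (N ω : ℝ)}).toReal / (ℙ {ω | x < (N ω : ℝ)}).toReal)
        atTop (𝓝 (Real.exp (-y))))
    (haux : Tendsto (fun x : ℝ => a x / x ^ ((2 : ℝ) / 3)) atTop atTop) :
    ∃ C > 0, ∀ᶠ m in atTop,
      C * Real.exp (-9 * m ^ ((1:ℝ)/3)) ≤ (ℙ {ω | m < (N ω : ℝ)}).toReal := by
  -- step inequality eventually
  have hstep0 : ∀ᶠ x in atTop,
      (1/8 : ℝ) ≤ (ℙ {ω | x + 1 * a x < (N ω : ℝ)}).toReal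
        / (ℙ {ω | x < (N ω : ℝ)}).toReal := by
    have h := (hGumbel 1).eventually (eventually_gt_nhds
      (show (1/8 : ℝ) < Real.exp (-1) by
        rw [Real.exp_neg, lt_inv_comm₀ (by norm_num) (Real.exp_pos 1)]
        calc Real.exp 1 < 2.7182818286 := Real.exp_one_lt_d9
          _ < (1/8)⁻¹ := by norm_num))
    filter_upwards [h] with x hx using hx.le
  have haux1 : ∀ᶠ x in atTop, (1:ℝ) ≤ a x / x ^ ((2:ℝ)/3) := haux.eventually_ge_atTop 1
  obtain ⟨x1', hx1'⟩ := eventually_atTop.mp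
    (hstep0.and (haux1.and (tail_pos N hN a hGumbel)))
  set x1 := max x1' 1 with hx1def
  have hx11 : (1:ℝ) ≤ x1 := le_max_right _ _
  have hx1 : ∀ x ≥ x1, ((1/8 : ℝ) ≤ (ℙ {ω | x + 1 * a x < (N ω : ℝ)}).toReal
        / (ℙ {ω | x < (N ω : ℝ)}).toReal) ∧ (1:ℝ) ≤ a x / x ^ ((2:ℝ)/3) ∧
        0 < (ℙ {ω | x < (N ω : ℝ)}).toReal :=
    fun x hx => hx1' x ((le_max_left _ _).trans hx)
  -- basic consequences for x ≥ x1
  have hax : ∀ x ≥ x1, x ^ ((2:ℝ)/3) ≤ a x := by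
    intro x hx
    have h23 : (0:ℝ) < x ^ ((2:ℝ)/3) := Real.rpow_pos_of_pos (by linarith [hx11]) _
    have := (hx1 x hx).2.1
    rw [le_div_iff₀ h23] at this
    linarith
  have hstep : ∀ x ≥ x1, (1/8 : ℝ) * (ℙ {ω | x < (N ω : ℝ)}).toReal ≤
      (ℙ {ω | x + 1 * a x < (N ω : ℝ)}).toReal := by
    intro x hx
    have hpos := (hx1 x hx).2.2
    have := (hx1 x hx).1
    rw [le_div_iff₀ hpos] at this
    linarith
  set P0 := (ℙ {ω | x1 < (N ω : ℝ)}).toReal with hP0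
  have hP0pos : 0 < P0 := (hx1 x1 le_rfl).2.2
  -- facts about the chain
  set s : ℕ → ℝ := chainSeq a x1 with hs
  have hmain : ∀ j : ℕ, (x1 ≤ s j ∧ (((j:ℝ)/4)^3 ≤ s j)) ∧
      (1/8 : ℝ)^j * P0 ≤ (ℙ {ω | s j < (N ω : ℝ)}).toReal := by
    intro j
    induction j with
    | zero =>
      have hs0 : s 0 = x1 := rfl
      refine ⟨⟨le_rfl, by rw [hs0]; norm_num; linarith⟩, by simp [hs0, hP0]⟩
    | succ j ih =>
      obtain ⟨⟨h1, h2⟩, h3⟩ := ih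
      have hsj1 : (1:ℝ) ≤ s j := hx11.trans h1
      have hsj0 : (0:ℝ) ≤ s j := by linarith
      have hasj : (s j) ^ ((2:ℝ)/3) ≤ a (s j) := hax _ h1
      have h23pos : (0:ℝ) < (s j) ^ ((2:ℝ)/3) := Real.rpow_pos_of_pos (by linarith) _
      have hseq : s (j+1) = s j + a (s j) := rfl
      constructor
      · constructor
        · rw [hseq]; nlinarith
        · -- cube-root growth
          set u : ℝ := (s j) ^ ((1:ℝ)/3) with hu
          have hu1 : (1:ℝ) ≤ u := by
            rw [hu]
            exact Real.one_le_rpow hsj1 (by norm_num)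
          have hu3 : u^3 = s j := by
            rw [hu, ← Real.rpow_natCast ((s j) ^ ((1:ℝ)/3)) 3, ← Real.rpow_mul hsj0]
            norm_num
          have hu2 : u^2 = (s j) ^ ((2:ℝ)/3) := by
            rw [hu, ← Real.rpow_natCast ((s j) ^ ((1:ℝ)/3)) 2, ← Real.rpow_mul hsj0]
            norm_num
          have huj : (j:ℝ)/4 ≤ u := by
            by_contra hcon
            push_neg at hcon
            have : u^3 < ((j:ℝ)/4)^3 := by
              apply pow_lt_pow_left₀ hcon (by linarith) (by norm_num)
            rw [hu3] at this; linarith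
          have hcube : (u + 1/4)^3 ≤ u^3 + u^2 := by nlinarith
          calc ((((j:ℕ)+1:ℕ):ℝ)/4)^3 = (((j:ℝ)+1)/4)^3 := by push_cast; ring
            _ ≤ (u + 1/4)^3 := by
                apply pow_le_pow_left₀ (by positivity) (by push_cast; linarith)
            _ ≤ u^3 + u^2 := hcube
            _ = s j + (s j) ^ ((2:ℝ)/3) := by rw [hu3, hu2]
            _ ≤ s (j+1) := by rw [hseq]; linarith
      · -- probability chain
        have hstepj := hstep (s j) h1
        have hsets : {ω | s j + 1 * a (s j) < (N ω : ℝ)} = {ω | s (j+1) < (N ω : ℝ)} := by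
          ext ω; simp [hseq]
        rw [hsets] at hstepj
        calc (1/8 : ℝ)^(j+1) * P0 = (1/8) * ((1/8:ℝ)^j * P0) := by ring
          _ ≤ (1/8) * (ℙ {ω | s j < (N ω : ℝ)}).toReal := by
              apply mul_le_mul_of_nonneg_left h3 (by norm_num)
          _ ≤ (ℙ {ω | s (j+1) < (N ω : ℝ)}).toReal := hstepj
  -- conclude
  refine ⟨Real.exp (-3) * P0, by positivity, ?_⟩
  filter_upwards [eventually_ge_atTop x1] with m hm
  have hm1 : (1:ℝ) ≤ m := hx11.trans hm
  have hm0 : (0:ℝ) ≤ m := by linarith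
  set j := ⌈4 * m ^ ((1:ℝ)/3)⌉₊ with hj
  have hm13nn : (0:ℝ) ≤ m ^ ((1:ℝ)/3) := Real.rpow_nonneg hm0 _
  have hjge : 4 * m ^ ((1:ℝ)/3) ≤ (j:ℝ) := Nat.le_ceil _
  have hjle : (j:ℝ) ≤ 4 * m ^ ((1:ℝ)/3) + 1 := by
    have := Nat.ceil_lt_add_one (by positivity : (0:ℝ) ≤ 4 * m ^ ((1:ℝ)/3))
    linarith
  -- s j ≥ m
  have hsjm : m ≤ s j := by
    obtain ⟨⟨_, h2⟩, _⟩ := hmain j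
    have hcube : (m ^ ((1:ℝ)/3))^3 = m := by
      rw [← Real.rpow_natCast (m ^ ((1:ℝ)/3)) 3, ← Real.rpow_mul hm0]
      norm_num
    have : (m ^ ((1:ℝ)/3))^3 ≤ ((j:ℝ)/4)^3 := by
      apply pow_le_pow_left₀ hm13nn (by linarith)
    rw [hcube] at this
    linarith
  have hsub : {ω | s j < (N ω : ℝ)} ⊆ {ω | m < (N ω : ℝ)} := by
    intro ω hω
    simp only [Set.mem_setOf_eq] at *
    linarith
  have hmono : (ℙ {ω | s j < (N ω : ℝ)}).toReal ≤ (ℙ {ω | m < (N ω : ℝ)}).toReal :=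
    ENNReal.toReal_le_toReal (measure_ne_top _ _) (measure_ne_top _ _) |>.mpr
      (measure_mono hsub)
  -- (1/8)^j ≥ exp(-3) exp(-9 m^{1/3})
  have hpow : Real.exp (-3) * Real.exp (-9 * m ^ ((1:ℝ)/3)) ≤ (1/8 : ℝ)^j := by
    have h8 : (1/8 : ℝ)^j = Real.exp ((j:ℝ) * Real.log (1/8)) := by
      rw [Real.exp_nat_mul, Real.exp_log (show (0:ℝ) < 1/8 by norm_num)]
    rw [h8, ← Real.exp_add]
    apply Real.exp_le_exp.2
    have hlog8 : Real.log (1/8) = -Real.log 8 := by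
      rw [one_div, Real.log_inv]
    have hl8 : Real.log 8 ≤ 2.1 := by
      have h2 : (8:ℝ) = 2^(3:ℕ) := by norm_num
      rw [h2, Real.log_pow]
      have := Real.log_two_lt_d9
      push_cast
      nlinarith
    have hl8nn : 0 ≤ Real.log 8 := Real.log_nonneg (by norm_num)
    rw [hlog8]
    have : (j:ℝ) * Real.log 8 ≤ (4 * m ^ ((1:ℝ)/3) + 1) * 2.1 := by
      apply mul_le_mul hjle hl8 hl8nn (by positivity)
    nlinarith
  calc Real.exp (-3) * P0 * Real.exp (-9 * m ^ ((1:ℝ)/3))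
      = (Real.exp (-3) * Real.exp (-9 * m ^ ((1:ℝ)/3))) * P0 := by ring
    _ ≤ (1/8:ℝ)^j * P0 := by
        apply mul_le_mul_of_nonneg_right hpow hP0pos.le
    _ ≤ (ℙ {ω | s j < (N ω : ℝ)}).toReal := (hmain j).2
    _ ≤ (ℙ {ω | m < (N ω : ℝ)}).toReal := hmono

end Tail

set_option maxHeartbeats 1600000 in
/-- Theorem 4.1 (Gumbel domain of attraction, `a(x)/x^{2/3} → ∞`,
arbitrary dependence between `N` and the `Xᵢ`). -/
theorem random_sum_tail_gumbel
    {Ω : Type*} [MeasureSpace Ω] [IsProbabilityMeasure (ℙ : Measure Ω)]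
    (N : Ω → ℕ) (hN : Measurable N)
    (X : ℕ → Ω → ℝ) (hX : ∀ i, Measurable (X i))
    (hiid : iIndepFun X ℙ)
    (hid : ∀ i, IdentDistrib (X i) (X 0) ℙ ℙ)
    (hpos : ∀ i, 0 ≤ᵐ[ℙ] X i)
    (hint : Integrable (X 0) ℙ)
    (μ : ℝ) (hμ : μ = ∫ ω, X 0 ω ∂ℙ) (hμpos : 0 < μ)
    -- E[e^{γ X₁}] < ∞ for some γ > 0
    (γ : ℝ) (hγ : 0 < γ)
    (hexpmom : Integrable (fun ω => Real.exp (γ * X 0 ω)) ℙ)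
    -- `N` is in the Gumbel domain of attraction with auxiliary function `a`
    (a : ℝ → ℝ) (ha : ∀ᶠ x in atTop, 0 < a x)
    (hGumbel : ∀ y : ℝ, Tendsto (fun x : ℝ =>
        (ℙ {ω | x + y * a x < (N ω : ℝ)}).toReal / (ℙ {ω | x < (N ω : ℝ)}).toReal)
        atTop (𝓝 (Real.exp (-y))))
    -- a(x)/x^{2/3} → ∞
    (haux : Tendsto (fun x : ℝ => a x / x ^ ((2 : ℝ) / 3)) atTop atTop) :
    -- P[S_N > x] ~ P[N > x/μ]
    Tendsto (fun x : ℝ =>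
        (ℙ {ω | x < ∑ i ∈ Finset.range (N ω), X i ω}).toReal
          / (ℙ {ω | x / μ < (N ω : ℝ)}).toReal) atTop (𝓝 1) := by
  obtain ⟨c, hcpos, hmgf⟩ := mgf_quad_bound (X 0) (hX 0) (hpos 0) hint μ γ hμ hγ hexpmom
  obtain ⟨C, hCpos, hchain⟩ := chain_lower_bound N hN a hGumbel haux
  have hm : Tendsto (fun x : ℝ => x / μ) atTop atTop :=
    Tendsto.atTop_div_const hμpos tendsto_id
  have hposall : ∀ᵐ ω ∂(ℙ : Measure Ω), ∀ i, (0:ℝ) ≤ X i ω := ae_all_iff.2 fun i => hpos i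
  rw [Metric.tendsto_nhds]
  intro δ hδ
  -- choice of ε
  set ε := min (min 1 (2*γ*c/μ)) (Real.log (1 + δ/4)) with hεdef
  have hεpos : 0 < ε :=
    lt_min (lt_min one_pos (by positivity)) (Real.log_pos (by linarith))
  have hε1 : ε ≤ 1 := (min_le_left _ _).trans (min_le_left _ _)
  have hεγ : ε * μ / (4*c) ≤ γ/2 := by
    have h : ε ≤ 2*γ*c/μ := le_trans (min_le_left _ (Real.log (1 + δ/4))) (min_le_right 1 _)
    rw [div_le_iff₀ (by positivity)]
    have h2 := mul_le_mul_of_nonneg_right h hμpos.le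
    rw [div_mul_cancel₀ _ hμpos.ne'] at h2
    linarith
  have hεlog : ε ≤ Real.log (1 + δ/4) := min_le_right _ _
  have hexpε : Real.exp ε ≤ 1 + δ/4 := by
    calc Real.exp ε ≤ Real.exp (Real.log (1+δ/4)) := Real.exp_le_exp.2 hεlog
      _ = 1 + δ/4 := Real.exp_log (by linarith)
  have hexpnε : 1 - δ/4 ≤ Real.exp (-ε) := by
    have h1 : ε ≤ δ/4 := hεlog.trans (by
      have := Real.log_le_sub_one_of_pos (show (0:ℝ) < 1 + δ/4 by linarith)
      linarith)
    have := Real.add_one_le_exp (-ε)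
    linarith
  set D := ε^2*μ^2/(16*c) with hD
  have hDpos : 0 < D := by positivity
  -- eventual smallness of the Chernoff error against the tail of N
  have hsmall : ∀ᶠ (w : ℝ) in atTop,
      Real.exp (-(D * (a w)^2 / w)) ≤ (δ/4) * (ℙ {ω | w < (N ω : ℝ)}).toReal := by
    have h13 : Tendsto (fun w : ℝ => w ^ ((1:ℝ)/3)) atTop atTop :=
      tendsto_rpow_atTop (by norm_num)
    have hexp0 : Tendsto (fun w : ℝ => Real.exp (-(w ^ ((1:ℝ)/3)))) atTop (𝓝 0) :=
      Real.tendsto_exp_atBot.comp (tendsto_neg_atTop_atBot.comp h13)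
    have hexpsm := hexp0.eventually
      (eventually_lt_nhds (show (0:ℝ) < (δ/4)*C by positivity))
    have hauxev : ∀ᶠ w in atTop, Real.sqrt (10/D) ≤ a w / w ^ ((2:ℝ)/3) :=
      haux.eventually_ge_atTop _
    filter_upwards [hchain, hauxev, hexpsm, eventually_ge_atTop (1:ℝ)] with w h1 h2 h3 h4
    have hw0 : (0:ℝ) < w := lt_of_lt_of_le one_pos h4
    have hsq : 10/D ≤ (a w / w ^ ((2:ℝ)/3))^2 := by
      rw [← Real.sq_sqrt (show (0:ℝ) ≤ 10/D by positivity)]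
      exact pow_le_pow_left₀ (Real.sqrt_nonneg _) h2 2
    have e1 : (a w / w^((2:ℝ)/3))^2 = (a w)^2 / w^((4:ℝ)/3) := by
      rw [div_pow, ← Real.rpow_natCast (w ^ ((2:ℝ)/3)) 2, ← Real.rpow_mul hw0.le]
      norm_num
    have e2 : w^((4:ℝ)/3) = w * w^((1:ℝ)/3) := by
      rw [show (4:ℝ)/3 = 1 + 1/3 by norm_num, Real.rpow_add hw0, Real.rpow_one]
    have h13pos : (0:ℝ) < w^((1:ℝ)/3) := Real.rpow_pos_of_pos hw0 _
    have h43pos : (0:ℝ) < w^((4:ℝ)/3) := Real.rpow_pos_of_pos hw0 _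
    have hkey : 10 * w^((1:ℝ)/3) ≤ D * (a w)^2/w := by
      rw [e1] at hsq
      have e3 : D * (a w)^2/w = D * ((a w)^2/w^((4:ℝ)/3)) * w^((1:ℝ)/3) := by
        rw [e2]
        field_simp
      rw [e3]
      have h5 : 10/D * (D * w^((1:ℝ)/3)) ≤ (a w)^2/w^((4:ℝ)/3) * (D * w^((1:ℝ)/3)) :=
        mul_le_mul_of_nonneg_right hsq (by positivity)
      have h6 : 10/D * (D * w^((1:ℝ)/3)) = 10 * w^((1:ℝ)/3) := by
        field_simp
      rw [h6] at h5
      linarith [h5]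
    calc Real.exp (-(D * (a w)^2 / w))
        ≤ Real.exp (-9 * w^((1:ℝ)/3)) * Real.exp (-(w^((1:ℝ)/3))) := by
          rw [← Real.exp_add]
          apply Real.exp_le_exp.2
          linarith
      _ ≤ Real.exp (-9 * w^((1:ℝ)/3)) * ((δ/4)*C) := by
          apply mul_le_mul_of_nonneg_left h3.le (Real.exp_pos _).le
      _ = (δ/4) * (C * Real.exp (-9 * w^((1:ℝ)/3))) := by ring
      _ ≤ (δ/4) * (ℙ {ω | w < (N ω : ℝ)}).toReal := by
          apply mul_le_mul_of_nonneg_left h1 (by positivity)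
  -- Gumbel ratio bounds composed with x ↦ x/μ
  have hg1 := hGumbel (-ε)
  rw [neg_neg] at hg1
  have hup := (hg1.comp hm).eventually
    (eventually_lt_nhds (show Real.exp ε < Real.exp ε + δ/4 by linarith))
  have hlow := ((hGumbel ε).comp hm).eventually
    (eventually_gt_nhds (show Real.exp (-ε) - δ/4 < Real.exp (-ε) by linarith))
  -- main eventual estimate
  filter_upwards [hm.eventually ha, hm.eventually (aux_le_self N hN a hGumbel),
    hm.eventually_ge_atTop 1, hm.eventually (tail_pos N hN a hGumbel),
    hm.eventually hsmall, hup, hlow] with x hax hale h1m hPden hsm hu hl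
  simp only [Function.comp_apply, id_eq] at hax hale h1m hPden hsm hu hl
  set m := x / μ with hmdef
  set Pden := (ℙ {ω | m < (N ω : ℝ)}).toReal with hPdendef
  have hm0 : (0:ℝ) < m := lt_of_lt_of_le one_pos h1m
  have hεa_pos : 0 < ε * a m := by positivity
  have hεa_le : ε * a m ≤ m := by
    calc ε * a m ≤ 1 * a m := mul_le_mul_of_nonneg_right hε1 hax.le
      _ = a m := one_mul _
      _ ≤ m := hale
  set t := ε*μ*(a m)/(4*c*m) with htdef
  have ht0 : 0 < t := by positivity
  have htγ : t ≤ γ/2 := by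
    have he : t = ε*μ/(4*c) * (a m / m) := by rw [htdef]; field_simp
    have h1 : a m / m ≤ 1 := (div_le_one hm0).2 hale
    calc t = ε*μ/(4*c) * (a m / m) := he
      _ ≤ ε*μ/(4*c) * 1 := mul_le_mul_of_nonneg_left h1 (by positivity)
      _ = ε*μ/(4*c) := mul_one _
      _ ≤ γ/2 := hεγ
  have habs : |t| ≤ γ/2 := by rw [abs_of_pos ht0]; exact htγ
  have hxμ : μ * m = x := by rw [hmdef]; field_simp
  set K := ε^2*μ^2*(a m)^2/(c*m) with hKdef
  have hKnn : 0 ≤ K := by positivity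
  have hDK : D * (a m)^2/m = (1/16)*K := by rw [hD, hKdef]; field_simp
  set Err := Real.exp (-(D * (a m)^2 / m)) with hErrdef
  -- UPPER BOUND
  set n0 := ⌊m - ε * a m⌋₊ with hn0def
  have hn0r : (n0:ℝ) ≤ m - ε * a m := Nat.floor_le (by linarith)
  have hn0m : (n0:ℝ) ≤ m := by linarith
  have hinclU : ℙ {ω | x < ∑ i ∈ Finset.range (N ω), X i ω} ≤
      ℙ ({ω | m + (-ε) * a m < (N ω:ℝ)} ∪ {ω | x ≤ ∑ i ∈ Finset.range n0, X i ω}) := by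
    refine measure_mono_ae (hposall.mono fun ω hω hmem => ?_)
    change x < ∑ i ∈ Finset.range (N ω), X i ω at hmem; show ω ∈ ({ω | m + (-ε) * a m < (N ω:ℝ)} ∪ {ω | x ≤ ∑ i ∈ Finset.range n0, X i ω} : Set Ω)
    by_cases hA : m + (-ε) * a m < (N ω : ℝ)
    · exact Or.inl hA
    · right
      push_neg at hA
      have hNle : N ω ≤ n0 := Nat.le_floor (by linarith)
      have hsum : ∑ i ∈ Finset.range (N ω), X i ω ≤ ∑ i ∈ Finset.range n0, X i ω :=
        Finset.sum_le_sum_of_subset_of_nonneg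
          (Finset.range_subset_range.2 hNle) (fun i _ _ => hω i)
      exact le_trans (le_of_lt hmem) hsum
  have hBU := chernoff_upper X hX hiid hid μ γ c hmgf n0 x t ht0.le habs
  have hexpU : -t*x + n0*(t*μ + c*t^2) ≤ -(D * (a m)^2 / m) := by
    have hh1 := mul_le_mul_of_nonneg_right hn0r (mul_nonneg ht0.le hμpos.le)
    have hh2 := mul_le_mul_of_nonneg_right hn0m (mul_nonneg hcpos.le (sq_nonneg t))
    have hh3 : -t*x + ((m - ε*(a m))*(t*μ) + m*(c*t^2)) = -(ε*(a m)*t*μ) + m*c*t^2 := by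
      rw [← hxμ]; ring
    have hh4 : -(ε*(a m)*t*μ) + m*c*t^2 = -(3/16)*K := by
      rw [htdef, hKdef]
      field_simp
      ring
    have hh5 : -(3/16)*K ≤ -(1/16)*K := by linarith
    have hsplit : (n0:ℝ)*(t*μ + c*t^2) = (n0:ℝ)*(t*μ) + (n0:ℝ)*(c*t^2) := by ring
    rw [hDK]
    linarith [hh1, hh2, hh3, hh4, hh5, hsplit]
  have hErrU : (ℙ {ω | x ≤ ∑ i ∈ Finset.range n0, X i ω}).toReal ≤ Err := by
    refine hBU.trans ?_
    rw [hErrdef]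
    exact Real.exp_le_exp.2 hexpU
  have hnumU : (ℙ {ω | x < ∑ i ∈ Finset.range (N ω), X i ω}).toReal ≤
      (ℙ {ω | m + (-ε) * a m < (N ω:ℝ)}).toReal + Err := by
    have step1 : (ℙ {ω | x < ∑ i ∈ Finset.range (N ω), X i ω}).toReal ≤
        (ℙ ({ω | m + (-ε) * a m < (N ω:ℝ)} ∪ {ω | x ≤ ∑ i ∈ Finset.range n0, X i ω})).toReal :=
      ENNReal.toReal_le_toReal (measure_ne_top _ _) (measure_ne_top _ _) |>.mpr hinclU
    have step2 : (ℙ ({ω | m + (-ε) * a m < (N ω:ℝ)} ∪ {ω | x ≤ ∑ i ∈ Finset.range n0, X i ω})).toReal ≤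
        (ℙ {ω | m + (-ε) * a m < (N ω:ℝ)}).toReal +
          (ℙ {ω | x ≤ ∑ i ∈ Finset.range n0, X i ω}).toReal := by
      rw [← ENNReal.toReal_add (measure_ne_top _ _) (measure_ne_top _ _)]
      exact ENNReal.toReal_le_toReal (measure_ne_top _ _)
        (by exact ENNReal.add_ne_top.2 ⟨measure_ne_top _ _, measure_ne_top _ _⟩) |>.mpr
        (measure_union_le _ _)
    linarith
  -- LOWER BOUND
  set n1 := ⌈m + ε * a m⌉₊ with hn1def
  have hn1ge : m + ε * a m ≤ (n1:ℝ) := Nat.le_ceil _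
  have hn1le : (n1:ℝ) ≤ m + ε*a m + 1 := by
    have := Nat.ceil_lt_add_one (show (0:ℝ) ≤ m + ε * a m by linarith)
    linarith
  have hn1le3 : (n1:ℝ) ≤ 3*m := by linarith
  have hinclL : ℙ {ω | m + ε * a m < (N ω:ℝ)} ≤
      ℙ ({ω | x < ∑ i ∈ Finset.range (N ω), X i ω} ∪
        {ω | ∑ i ∈ Finset.range n1, X i ω ≤ x}) := by
    refine measure_mono_ae (hposall.mono fun ω hω hmem => ?_)
    change m + ε * a m < (N ω:ℝ) at hmem; show ω ∈ ({ω | x < ∑ i ∈ Finset.range (N ω), X i ω} ∪ {ω | ∑ i ∈ Finset.range n1, X i ω ≤ x} : Set Ω)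
    rcases le_or_gt (∑ i ∈ Finset.range n1, X i ω) x with hc1 | hc1
    · exact Or.inr hc1
    · left
      have hNge : n1 ≤ N ω := Nat.ceil_le.2 (le_of_lt hmem)
      have hsum : ∑ i ∈ Finset.range n1, X i ω ≤ ∑ i ∈ Finset.range (N ω), X i ω :=
        Finset.sum_le_sum_of_subset_of_nonneg
          (Finset.range_subset_range.2 hNge) (fun i _ _ => hω i)
      exact lt_of_lt_of_le hc1 hsum
  have hBL := chernoff_lower X hX hiid hid μ γ c hmgf n1 x (-t)
    (neg_nonpos.2 ht0.le) (by rwa [abs_neg])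
  have hexpL : -(-t)*x + n1*((-t)*μ + c*(-t)^2) ≤ -(D * (a m)^2 / m) := by
    have hh1 := mul_le_mul_of_nonneg_right hn1ge (mul_nonneg ht0.le hμpos.le)
    have hh2 := mul_le_mul_of_nonneg_right hn1le3 (mul_nonneg hcpos.le (sq_nonneg t))
    have hh3 : t*x - (m + ε*(a m))*(t*μ) + 3*m*(c*t^2) = -(ε*(a m)*t*μ) + 3*m*c*t^2 := by
      rw [← hxμ]; ring
    have hh4 : -(ε*(a m)*t*μ) + 3*m*c*t^2 = -(1/16)*K := by
      rw [htdef, hKdef]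
      field_simp
      ring
    have hsplit : (n1:ℝ)*((-t)*μ + c*(-t)^2) = -((n1:ℝ)*(t*μ)) + (n1:ℝ)*(c*t^2) := by ring
    have hneg : -(-t)*x = t*x := by ring
    rw [hDK]
    linarith [hh1, hh2, hh3, hh4, hsplit]
  have hErrL : (ℙ {ω | ∑ i ∈ Finset.range n1, X i ω ≤ x}).toReal ≤ Err := by
    refine hBL.trans ?_
    rw [hErrdef]
    exact Real.exp_le_exp.2 hexpL
  have hnumL : (ℙ {ω | m + ε * a m < (N ω:ℝ)}).toReal ≤
      (ℙ {ω | x < ∑ i ∈ Finset.range (N ω), X i ω}).toReal + Err := by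
    have step1 : (ℙ {ω | m + ε * a m < (N ω:ℝ)}).toReal ≤
        (ℙ ({ω | x < ∑ i ∈ Finset.range (N ω), X i ω} ∪
          {ω | ∑ i ∈ Finset.range n1, X i ω ≤ x})).toReal :=
      ENNReal.toReal_le_toReal (measure_ne_top _ _) (measure_ne_top _ _) |>.mpr hinclL
    have step2 : (ℙ ({ω | x < ∑ i ∈ Finset.range (N ω), X i ω} ∪
          {ω | ∑ i ∈ Finset.range n1, X i ω ≤ x})).toReal ≤
        (ℙ {ω | x < ∑ i ∈ Finset.range (N ω), X i ω}).toReal +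
          (ℙ {ω | ∑ i ∈ Finset.range n1, X i ω ≤ x}).toReal := by
      rw [← ENNReal.toReal_add (measure_ne_top _ _) (measure_ne_top _ _)]
      exact ENNReal.toReal_le_toReal (measure_ne_top _ _)
        (by exact ENNReal.add_ne_top.2 ⟨measure_ne_top _ _, measure_ne_top _ _⟩) |>.mpr
        (measure_union_le _ _)
    linarith
  -- combine
  have hErrPden : Err ≤ (δ/4) * Pden := hsm
  have hnum_nonneg : (0:ℝ) ≤ (ℙ {ω | x < ∑ i ∈ Finset.range (N ω), X i ω}).toReal :=
    ENNReal.toReal_nonneg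
  set num := (ℙ {ω | x < ∑ i ∈ Finset.range (N ω), X i ω}).toReal with hnumdef
  set PA := (ℙ {ω | m + (-ε) * a m < (N ω:ℝ)}).toReal with hPAdef
  set PB := (ℙ {ω | m + ε * a m < (N ω:ℝ)}).toReal with hPBdef
  have hdivU : num / Pden ≤ PA / Pden + δ/4 := by
    have h1 : num ≤ PA + (δ/4)*Pden := by linarith
    calc num / Pden ≤ (PA + (δ/4)*Pden) / Pden := div_le_div_of_nonneg_right h1 hPden.le
      _ = PA/Pden + δ/4 := by
          rw [add_div, mul_div_assoc, div_self hPden.ne', mul_one]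
  have hdivL : PB / Pden - δ/4 ≤ num / Pden := by
    have h1 : PB - (δ/4)*Pden ≤ num := by linarith
    calc PB / Pden - δ/4 = (PB - (δ/4)*Pden) / Pden := by
          rw [sub_div, mul_div_assoc, div_self hPden.ne', mul_one]
      _ ≤ num / Pden := div_le_div_of_nonneg_right h1 hPden.le
  have hfinU : num / Pden < 1 + 3*δ/4 := by
    have := hu
    linarith
  have hfinL : 1 - 3*δ/4 < num / Pden := by
    have := hl
    linarith
  rw [Real.dist_eq, abs_lt]
  constructor <;> linarith
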